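/- (Convergence of the synchronous relaxed nonstationary multisplitting method, M-matrix case.) Let A ∈ ℝ^{n×n} be an M-matrix, let D be its diagonal part and B = D − A, and set θ = ρ(D⁻¹B). Let ω ∈ (0, 2/(1+θ)). For i = 1, …, m, let A = M_i − N_i be M-splittings, and let E₁, …, E_m be nonnegative diagonal matrices with Σ_{i=1}^m E_i = I. Let η = θ / (Σ_{i=1}^m ‖E_i‖), and suppose s̃ is a positive integer such that ‖(M_i⁻¹N_i)^s‖ ≤ η for all s ≥ s̃ and all i = 1, …, m, where ‖·‖ is the matrix ∞-norm. Let x* ∈ ℝⁿ be a solution of LCP(A, f). Let integers s(k,i) ≥ s̃ be given for all k ≥ 1 and i = 1, …, m, and define the sequence {x^k} by: given x^k, for each i set y^{0,i} = x^k and for j = 1, …, s(k,i) let y^{j,i} solve LCP(M_i, f + N_i y^{j−1,i}); then x^{k+1} = ω Σ_{i=1}^m E_i y^{s(k,i),i} + (1−ω) x^k. Then x^k converges to x* as k → ∞. -/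

import Mathlib

open Matrix Filter

noncomputable section

/-- Comparison matrix `⟨A⟩`: `α_ii = |a_ii|`, `α_ij = -|a_ij|` for `i ≠ j`. -/
def cmpMat {n : ℕ} (A : Matrix (Fin n) (Fin n) ℝ) : Matrix (Fin n) (Fin n) ℝ :=
  Matrix.of fun i j => if i = j then |A i j| else -|A i j|

/-- Entrywise absolute value of a matrix. -/
def absMat {n : ℕ} (A : Matrix (Fin n) (Fin n) ℝ) : Matrix (Fin n) (Fin n) ℝ :=
  Matrix.of fun i j => |A i j|

/-- `A` is an M-matrix: nonpositive off-diagonal entries, nonsingular,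
and entrywise nonnegative inverse. -/
def IsMMat {n : ℕ} (A : Matrix (Fin n) (Fin n) ℝ) : Prop :=
  (∀ i j, i ≠ j → A i j ≤ 0) ∧ IsUnit A.det ∧ ∀ i j, 0 ≤ A⁻¹ i j

/-- `A` is an H-matrix: its comparison matrix is an M-matrix. -/
def IsHMat {n : ℕ} (A : Matrix (Fin n) (Fin n) ℝ) : Prop := IsMMat (cmpMat A)

/-- `A` is an H₊-matrix: an H-matrix with positive diagonal entries. -/
def IsHpMat {n : ℕ} (A : Matrix (Fin n) (Fin n) ℝ) : Prop :=
  IsHMat A ∧ ∀ i, 0 < A i i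

/-- Spectral radius of a real matrix: supremum of moduli of its complex eigenvalues. -/
def specRad {n : ℕ} (A : Matrix (Fin n) (Fin n) ℝ) : ℝ :=
  sSup {r : ℝ | ∃ μ : ℂ, μ ∈ spectrum ℂ (A.map Complex.ofReal) ∧ r = ‖μ‖}

/-- Matrix ∞-norm: maximum absolute row sum. -/
def infNorm {n : ℕ} (A : Matrix (Fin n) (Fin n) ℝ) : ℝ :=
  ⨆ i, ∑ j, |A i j|

/-- `x` solves the linear complementarity problem LCP(A, f):
`x ≥ 0`, `Ax - f ≥ 0`, `xᵀ(Ax - f) = 0`. -/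
def SolvesLCP {n : ℕ} (A : Matrix (Fin n) (Fin n) ℝ) (f x : Fin n → ℝ) : Prop :=
  (∀ j, 0 ≤ x j) ∧ (∀ j, f j ≤ (A *ᵥ x) j) ∧ ∑ j, x j * ((A *ᵥ x) j - f j) = 0

end

-- complementarity holds componentwise
lemma lcp_comp {n : ℕ} {M : Matrix (Fin n) (Fin n) ℝ} {g x : Fin n → ℝ}
    (h : SolvesLCP M g x) : ∀ p, x p * ((M *ᵥ x) p - g p) = 0 := by
  obtain ⟨h1, h2, h3⟩ := h
  intro p
  have := (Finset.sum_eq_zero_iff_of_nonneg (fun q _ =>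
    mul_nonneg (h1 q) (sub_nonneg.2 (h2 q)))).1 h3
  exact this p (Finset.mem_univ p)

lemma lcp_one_sided {n : ℕ} {M : Matrix (Fin n) (Fin n) ℝ} (hM : IsMMat M)
    {g g' x x' : Fin n → ℝ} (hx : SolvesLCP M g x) (hx' : SolvesLCP M g' x') :
    ∀ p, x p - x' p ≤ (M⁻¹ *ᵥ fun q => |g q - g' q|) p := by
  obtain ⟨hZ, hdet, hinv⟩ := hM
  set w : Fin n → ℝ := M⁻¹ *ᵥ fun q => |g q - g' q| with hw
  have hwnn : ∀ p, 0 ≤ w p := by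
    intro p
    simp only [hw, mulVec, dotProduct]
    exact Finset.sum_nonneg fun q _ => mul_nonneg (hinv p q) (abs_nonneg _)
  have hMw : ∀ p, (M *ᵥ w) p = |g p - g' p| := by
    intro p
    have : M *ᵥ w = (fun q => |g q - g' q|) := by
      rw [hw, mulVec_mulVec, Matrix.mul_nonsing_inv M hdet, one_mulVec]
    rw [this]
  set d : Fin n → ℝ := fun p => x p - x' p - w p with hd
  set dp : Fin n → ℝ := fun p => max (d p) 0 with hdp
  have hdpnn : ∀ p, 0 ≤ dp p := fun p => le_max_right _ _
  -- M *ᵥ dp ≤ 0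
  have hkey : ∀ p, (M *ᵥ dp) p ≤ 0 := by
    intro p
    have hsplit : (M *ᵥ dp) p = M p p * dp p + ∑ q ∈ Finset.univ.erase p, M p q * dp q := by
      rw [mulVec, dotProduct, ← Finset.add_sum_erase _ _ (Finset.mem_univ p)]
    have hoff : ∀ u : Fin n → ℝ, (∀ q, 0 ≤ u q ∨ dp q ≤ u q) → True := fun _ _ => trivial
    by_cases hc : 0 < d p
    · -- in this case x p > 0, so (Mx)p = g p
      have hxp : 0 < x p := by
        have := hwnn p
        have := (hx'.1 p)
        simp only [hd] at hc
        linarith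
      have hMx : (M *ᵥ x) p = g p := by
        have := lcp_comp hx p
        rcases mul_eq_zero.1 this with h | h
        · linarith
        · linarith [sub_eq_zero.1 h]
      have hMd : (M *ᵥ (fun q => d q)) p ≤ 0 := by
        have e1 : (M *ᵥ fun q => d q) p = (M *ᵥ x) p - (M *ᵥ x') p - (M *ᵥ w) p := by
          simp only [hd, mulVec, dotProduct, mul_sub, Finset.sum_sub_distrib]
        rw [e1, hMx, hMw]
        have := hx'.2.1 p
        have habs := le_abs_self (g p - g' p)
        linarith
      -- M dp ≤ M d at p : since dp q ≥ d q and M p q ≤ 0 for q ≠ p, dp p = d p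
      have hdpp : dp p = d p := max_eq_left hc.le
      have : (M *ᵥ dp) p ≤ (M *ᵥ (fun q => d q)) p := by
        rw [hsplit]
        have e2 : (M *ᵥ fun q => d q) p
            = M p p * d p + ∑ q ∈ Finset.univ.erase p, M p q * d q := by
          rw [mulVec, dotProduct, ← Finset.add_sum_erase _ _ (Finset.mem_univ p)]
        rw [e2, hdpp]
        refine add_le_add_right (Finset.sum_le_sum fun q hq =>
          mul_le_mul_of_nonpos_left (le_max_left _ _)
            (hZ p q ((Finset.mem_erase.1 hq).1.symm))) _
      linarith
    · -- d p ≤ 0, dp p = 0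
      have hdpp : dp p = 0 := max_eq_right (not_lt.1 hc)
      rw [hsplit, hdpp, mul_zero, zero_add]
      exact Finset.sum_nonpos fun q hq =>
        mul_nonpos_of_nonpos_of_nonneg (hZ p q ((Finset.mem_erase.1 hq).1.symm)) (hdpnn q)
  -- dp = M⁻¹ (M dp) ≤ 0
  have hco : ∀ p, dp p ≤ 0 := by
    intro p
    have : dp p = (M⁻¹ *ᵥ (M *ᵥ dp)) p := by
      rw [mulVec_mulVec, Matrix.nonsing_inv_mul M hdet, one_mulVec]
    rw [this]
    simp only [mulVec, dotProduct]
    exact Finset.sum_nonpos fun q _ => mul_nonpos_of_nonneg_of_nonpos (hinv p q) (hkey q)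
  intro p
  have h1 : d p ≤ dp p := le_max_left _ _
  have := hco p
  simp only [hd] at h1
  linarith

lemma lcp_lipschitz {n : ℕ} {M : Matrix (Fin n) (Fin n) ℝ} (hM : IsMMat M)
    {g g' x x' : Fin n → ℝ} (hx : SolvesLCP M g x) (hx' : SolvesLCP M g' x') :
    ∀ p, |x p - x' p| ≤ (M⁻¹ *ᵥ fun q => |g q - g' q|) p := by
  intro p
  rw [abs_sub_le_iff]
  constructor
  · exact lcp_one_sided hM hx hx' p
  · have := lcp_one_sided hM hx' hx p
    have e : (fun q => |g' q - g q|) = fun q => |g q - g' q| := by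
      funext q; rw [abs_sub_comm]
    rwa [e] at this

lemma mmat_diag_pos {n : ℕ} {A : Matrix (Fin n) (Fin n) ℝ} (hA : IsMMat A) :
    ∀ p, 0 < A p p := by
  obtain ⟨hZ, hdet, hinv⟩ := hA
  intro p
  have h1 : (A * A⁻¹) p p = 1 := by rw [Matrix.mul_nonsing_inv A hdet, one_apply_eq]
  have h2 : A p p * A⁻¹ p p + ∑ q ∈ Finset.univ.erase p, A p q * A⁻¹ q p = 1 := by
    rw [← h1, Matrix.mul_apply, ← Finset.add_sum_erase _ _ (Finset.mem_univ p)]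
  have h3 : ∑ q ∈ Finset.univ.erase p, A p q * A⁻¹ q p ≤ 0 :=
    Finset.sum_nonpos fun q hq =>
      mul_nonpos_of_nonpos_of_nonneg (hZ p q ((Finset.mem_erase.1 hq).1.symm)) (hinv q p)
  have h4 : 1 ≤ A p p * A⁻¹ p p := by linarith
  by_contra hc
  push_neg at hc
  nlinarith [hinv p p]

-- the set of eigenvalue moduli is finite
lemma specSet_finite {n : ℕ} (A : Matrix (Fin n) (Fin n) ℝ) :
    Set.Finite {r : ℝ | ∃ μ : ℂ, μ ∈ spectrum ℂ (A.map Complex.ofReal) ∧ r = ‖μ‖} := by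
  have h := Matrix.finite_spectrum (A.map Complex.ofReal)
  have : {r : ℝ | ∃ μ : ℂ, μ ∈ spectrum ℂ (A.map Complex.ofReal) ∧ r = ‖μ‖}
      = (fun μ : ℂ => ‖μ‖) '' (spectrum ℂ (A.map Complex.ofReal)) := by
    ext r; simp [eq_comm, Set.mem_image]
  rw [this]
  exact h.image _

lemma specRad_nonneg {n : ℕ} (A : Matrix (Fin n) (Fin n) ℝ) : 0 ≤ specRad A := by
  rcases Set.eq_empty_or_nonempty
      {r : ℝ | ∃ μ : ℂ, μ ∈ spectrum ℂ (A.map Complex.ofReal) ∧ r = ‖μ‖} with h | h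
  · rw [specRad, h, Real.sSup_empty]
  · obtain ⟨r, μ, hμ, hr⟩ := h
    have := le_csSup (specSet_finite A).bddAbove ⟨μ, hμ, hr⟩
    have h0 : (0:ℝ) ≤ r := hr ▸ norm_nonneg μ
    exact le_trans h0 this

lemma specRad_lt_one_of_forall {n : ℕ} (A : Matrix (Fin n) (Fin n) ℝ)
    (h : ∀ μ : ℂ, μ ∈ spectrum ℂ (A.map Complex.ofReal) → ‖μ‖ < 1) :
    specRad A < 1 := by
  rcases Set.eq_empty_or_nonempty
      {r : ℝ | ∃ μ : ℂ, μ ∈ spectrum ℂ (A.map Complex.ofReal) ∧ r = ‖μ‖} with he | hne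
  · rw [specRad, he, Real.sSup_empty]; norm_num
  · have hfin := specSet_finite A
    have := Set.Nonempty.csSup_mem hne hfin
    obtain ⟨μ, hμ, hr⟩ := this
    rw [specRad, hr]
    exact h μ hμ

-- eigenvector existence
lemma exists_eigvec {n : ℕ} (B : Matrix (Fin n) (Fin n) ℂ) {μ : ℂ}
    (hμ : μ ∈ spectrum ℂ B) : ∃ v : Fin n → ℂ, v ≠ 0 ∧ B *ᵥ v = μ • v := by
  rw [spectrum.mem_iff] at hμ
  have hdet : (algebraMap ℂ (Matrix (Fin n) (Fin n) ℂ) μ - B).det = 0 := by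
    by_contra hd
    exact hμ ((Matrix.isUnit_iff_isUnit_det _).2 (isUnit_iff_ne_zero.2 hd))
  obtain ⟨v, hv0, hv⟩ := (Matrix.exists_mulVec_eq_zero_iff).2 hdet
  refine ⟨v, hv0, ?_⟩
  have := sub_mulVec (algebraMap ℂ (Matrix (Fin n) (Fin n) ℂ) μ) B v
  rw [hv] at this
  have h2 : (algebraMap ℂ (Matrix (Fin n) (Fin n) ℂ) μ) *ᵥ v = μ • v := by
    rw [Algebra.algebraMap_eq_smul_one, smul_mulVec, one_mulVec]
  rw [h2] at this
  exact (sub_eq_zero.1 this.symm).symm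

lemma jacobi_specRad_lt_one {n : ℕ} {A : Matrix (Fin n) (Fin n) ℝ} (hA : IsMMat A) :
    specRad ((Matrix.diagonal fun p => A p p)⁻¹ *
      (Matrix.diagonal (fun p => A p p) - A)) < 1 := by
  obtain ⟨hZ, hdet, hinv⟩ := hA
  have hdpos : ∀ p, 0 < A p p := mmat_diag_pos ⟨hZ, hdet, hinv⟩
  set v : Fin n → ℝ := fun p => A p p with hv
  have hDinv : (Matrix.diagonal v)⁻¹ = Matrix.diagonal (fun p => (v p)⁻¹) := by
    apply Matrix.inv_eq_right_inv
    rw [Matrix.diagonal_mul_diagonal]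
    have : (fun p => v p * (v p)⁻¹) = fun _ => (1:ℝ) := by
      funext p; exact mul_inv_cancel₀ (hdpos p).ne'
    rw [this, Matrix.diagonal_one]
  set J : Matrix (Fin n) (Fin n) ℝ :=
    (Matrix.diagonal v)⁻¹ * (Matrix.diagonal v - A) with hJ
  have hJnn : ∀ p q, 0 ≤ J p q := by
    intro p q
    rw [hJ, hDinv, Matrix.diagonal_mul]
    rcases eq_or_ne p q with h | h
    · subst h; simp [Matrix.sub_apply, hv]
    · have : (Matrix.diagonal v - A) p q = -A p q := by
        simp [Matrix.sub_apply, Matrix.diagonal_apply_ne _ h]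
      rw [this]
      exact mul_nonneg (inv_nonneg.2 (hdpos p).le) (neg_nonneg.2 (hZ p q h))
  have hIJ : (1 : Matrix (Fin n) (Fin n) ℝ) - J = Matrix.diagonal (fun p => (v p)⁻¹) * A := by
    rw [hJ, hDinv, Matrix.mul_sub, Matrix.diagonal_mul_diagonal]
    have : (fun p => (v p)⁻¹ * v p) = fun _ => (1:ℝ) := by
      funext p; exact inv_mul_cancel₀ (hdpos p).ne'
    rw [this, Matrix.diagonal_one]
    abel
  set S : Matrix (Fin n) (Fin n) ℝ := A⁻¹ * Matrix.diagonal v with hS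
  have hSnn : ∀ p q, 0 ≤ S p q := by
    intro p q
    rw [hS, Matrix.mul_diagonal]
    exact mul_nonneg (hinv p q) (hdpos q).le
  have hSid : S * ((1 : Matrix (Fin n) (Fin n) ℝ) - J) = 1 := by
    rw [hIJ, hS]
    have : Matrix.diagonal v * Matrix.diagonal (fun p => (v p)⁻¹) = 1 := by
      rw [Matrix.diagonal_mul_diagonal]
      have : (fun p => v p * (v p)⁻¹) = fun _ => (1:ℝ) := by
        funext p; exact mul_inv_cancel₀ (hdpos p).ne'
      rw [this, Matrix.diagonal_one]
    calc A⁻¹ * Matrix.diagonal v * (Matrix.diagonal (fun p => (v p)⁻¹) * A)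
        = A⁻¹ * (Matrix.diagonal v * Matrix.diagonal (fun p => (v p)⁻¹)) * A := by
          rw [Matrix.mul_assoc, Matrix.mul_assoc, Matrix.mul_assoc]
      _ = A⁻¹ * A := by rw [this, Matrix.mul_one]
      _ = 1 := Matrix.nonsing_inv_mul A hdet
  apply specRad_lt_one_of_forall
  intro μ hμ
  by_contra hge
  push_neg at hge
  obtain ⟨w, hw0, hwe⟩ := exists_eigvec (J.map Complex.ofReal) hμ
  set u : Fin n → ℝ := fun p => ‖w p‖ with hu
  have hunn : ∀ p, 0 ≤ u p := fun p => norm_nonneg _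
  have hkey : ∀ p, ‖μ‖ * u p ≤ (J *ᵥ u) p := by
    intro p
    have h1 : ‖μ‖ * u p = ‖(μ • w) p‖ := by
      simp [hu, norm_mul]
    rw [h1, ← hwe]
    have h2 : ((J.map Complex.ofReal) *ᵥ w) p = ∑ q, Complex.ofReal (J p q) * w q := by
      simp [Matrix.mulVec, dotProduct, Matrix.map_apply]
    rw [h2]
    calc ‖∑ q, Complex.ofReal (J p q) * w q‖
        ≤ ∑ q, ‖Complex.ofReal (J p q) * w q‖ := norm_sum_le _ _
      _ = ∑ q, J p q * u q := by
          apply Finset.sum_congr rfl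
          intro q _
          rw [norm_mul, Complex.norm_real, Real.norm_eq_abs, abs_of_nonneg (hJnn p q)]
      _ = (J *ᵥ u) p := by simp [Matrix.mulVec, dotProduct]
  have hIJu : ∀ p, (((1 : Matrix (Fin n) (Fin n) ℝ) - J) *ᵥ u) p ≤ 0 := by
    intro p
    rw [Matrix.sub_mulVec, Matrix.one_mulVec]
    have := hkey p
    have h3 : u p ≤ ‖μ‖ * u p := le_mul_of_one_le_left (hunn p) hge
    simp only [Pi.sub_apply]
    linarith
  have hup : ∀ p, u p ≤ 0 := by
    intro p
    have : u p = (S *ᵥ (((1 : Matrix (Fin n) (Fin n) ℝ) - J) *ᵥ u)) p := by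
      rw [Matrix.mulVec_mulVec, hSid, Matrix.one_mulVec]
    rw [this]
    simp only [Matrix.mulVec, dotProduct]
    exact Finset.sum_nonpos fun q _ => mul_nonpos_of_nonneg_of_nonpos (hSnn p q) (hIJu q)
  apply hw0
  funext p
  have := le_antisymm (hup p) (hunn p)
  have h0 : ‖w p‖ = 0 := this
  exact norm_eq_zero.1 h0

lemma mulVec_mono {n : ℕ} {B : Matrix (Fin n) (Fin n) ℝ} (hB : ∀ p q, 0 ≤ B p q)
    {a b : Fin n → ℝ} (h : ∀ q, a q ≤ b q) : ∀ p, (B *ᵥ a) p ≤ (B *ᵥ b) p := by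
  intro p
  simp only [Matrix.mulVec, dotProduct]
  exact Finset.sum_le_sum fun q _ => mul_le_mul_of_nonneg_left (h q) (hB p q)

lemma pow_entries_nonneg {n : ℕ} {B : Matrix (Fin n) (Fin n) ℝ}
    (hB : ∀ p q, 0 ≤ B p q) : ∀ s p q, 0 ≤ (B ^ s) p q := by
  intro s
  induction s with
  | zero =>
    intro p q
    rw [pow_zero]
    rcases eq_or_ne p q with h | h
    · subst h; rw [Matrix.one_apply_eq]; norm_num
    · rw [Matrix.one_apply_ne h]
  | succ s ih =>
    intro p q
    rw [pow_succ, Matrix.mul_apply]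
    exact Finset.sum_nonneg fun r _ => mul_nonneg (ih p r) (hB r q)

/-- Corollary 2.1: convergence of the synchronous relaxed nonstationary
multisplitting method for LCP with an M-matrix and M-splittings. -/
theorem sync_relaxed_nonstationary_multisplitting_converges_M {n m : ℕ}
    (A : Matrix (Fin n) (Fin n) ℝ) (f xstar : Fin n → ℝ)
    (hA : IsMMat A)
    (θ : ℝ)
    (hθ : θ = specRad ((Matrix.diagonal fun p => A p p)⁻¹ *
      (Matrix.diagonal (fun p => A p p) - A)))
    (ω : ℝ) (hω : 0 < ω ∧ ω < 2 / (1 + θ))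
    (M N : Fin m → Matrix (Fin n) (Fin n) ℝ)
    (hsplit : ∀ i, A = M i - N i)
    (hMM : ∀ i, IsMMat (M i))
    (hNnn : ∀ i, ∀ p q, 0 ≤ N i p q)
    (E : Fin m → Matrix (Fin n) (Fin n) ℝ)
    (hEdiag : ∀ i p q, p ≠ q → E i p q = 0)
    (hEnn : ∀ i p, 0 ≤ E i p p)
    (hEsum : ∑ i, E i = 1)
    (η : ℝ) (hη : η = θ / ∑ i, infNorm (E i))
    (st : ℕ) (hst : 0 < st)
    (hnorm : ∀ i, ∀ s, st ≤ s → infNorm (((M i)⁻¹ * N i) ^ s) ≤ η)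
    (hxstar : SolvesLCP A f xstar)
    (s : ℕ → Fin m → ℕ) (hs : ∀ k i, st ≤ s k i)
    (x : ℕ → Fin n → ℝ) (y : ℕ → Fin m → ℕ → Fin n → ℝ)
    (hy0 : ∀ k i, y k i 0 = x k)
    (hy : ∀ k i j, 1 ≤ j → j ≤ s k i →
      SolvesLCP (M i) (fun p => f p + (N i *ᵥ y k i (j - 1)) p) (y k i j))
    (hx : ∀ k, x (k + 1) = ω • (∑ i, E i *ᵥ y k i (s k i)) + (1 - ω) • x k) :
    Filter.Tendsto x Filter.atTop (nhds xstar) := by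
  rcases Nat.eq_zero_or_pos n with hn0 | hn
  · subst hn0
    have hxx : x = fun _ => xstar := funext fun k => funext fun p => p.elim0
    rw [hxx]
    exact tendsto_const_nhds
  have p0 : Fin n := ⟨0, hn⟩
  haveI : Nonempty (Fin n) := ⟨p0⟩
  -- m is nonempty
  have hm : Nonempty (Fin m) := by
    by_contra hc
    haveI := not_nonempty_iff.1 hc
    have h0 : (∑ i, E i) = 0 := by simp [Finset.univ_eq_empty]
    rw [h0] at hEsum
    have h1 := congrFun (congrFun hEsum p0) p0
    rw [Matrix.zero_apply, Matrix.one_apply_eq] at h1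
    norm_num at h1
  -- vector sup-norm helpers
  have hbdd : ∀ z : Fin n → ℝ, BddAbove (Set.range fun q => |z q|) :=
    fun z => (Set.finite_range _).bddAbove
  have habs_le : ∀ (z : Fin n → ℝ) (q : Fin n), |z q| ≤ ⨆ r, |z r| :=
    fun z q => le_ciSup (hbdd z) q
  have hvN0 : ∀ z : Fin n → ℝ, 0 ≤ ⨆ r, |z r| :=
    fun z => le_trans (abs_nonneg (z p0)) (habs_le z p0)
  -- infNorm helpers
  have hrow_le : ∀ (B : Matrix (Fin n) (Fin n) ℝ) (p : Fin n), (∑ q, |B p q|) ≤ infNorm B := by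
    intro B p
    rw [infNorm]
    exact le_ciSup (f := fun r => ∑ q, |B r q|) ((Set.finite_range _).bddAbove) p
  -- θ facts
  have hθ0 : 0 ≤ θ := hθ ▸ specRad_nonneg _
  have hθ1 : θ < 1 := hθ ▸ jacobi_specRad_lt_one hA
  -- sum of infNorms of the E i
  have hEdd : ∀ (i : Fin m) (p : Fin n), E i p p ≤ infNorm (E i) := by
    intro i p
    calc E i p p ≤ |E i p p| := le_abs_self _
      _ ≤ ∑ q, |E i p q| := Finset.single_le_sum (f := fun q => |E i p q|) (fun q _ => abs_nonneg _) (Finset.mem_univ p)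
      _ ≤ infNorm (E i) := hrow_le _ p
  have hEpp1 : ∀ p : Fin n, ∑ i, E i p p = 1 := by
    intro p
    have h1 := congrFun (congrFun hEsum p) p
    rw [Matrix.sum_apply] at h1
    rw [h1, Matrix.one_apply_eq]
  have hsE1 : (1:ℝ) ≤ ∑ i, infNorm (E i) := by
    rw [← hEpp1 p0]
    exact Finset.sum_le_sum fun i _ => hEdd i p0
  have hsE0 : (0:ℝ) < ∑ i, infNorm (E i) := lt_of_lt_of_le one_pos hsE1
  have hη0 : 0 ≤ η := hη ▸ div_nonneg hθ0 hsE0.le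
  have hηθ : (∑ i, infNorm (E i)) * η = θ := by
    rw [hη]; field_simp
  -- contraction constant
  set c : ℝ := ω * θ + |1 - ω| with hcdef
  have hc0 : 0 ≤ c := add_nonneg (mul_nonneg hω.1.le hθ0) (abs_nonneg _)
  have hθp : (0:ℝ) < 1 + θ := by linarith
  have hc1 : c < 1 := by
    rcases le_or_gt ω 1 with h | h
    · rw [hcdef, abs_of_nonneg (by linarith : (0:ℝ) ≤ 1 - ω)]
      nlinarith [hω.1]
    · rw [hcdef, abs_of_nonpos (by linarith : 1 - ω ≤ 0)]
      have h2 := (lt_div_iff₀ hθp).1 hω.2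
      nlinarith
  -- iteration matrices are entrywise nonnegative
  have hTnn : ∀ i : Fin m, ∀ p q, 0 ≤ ((M i)⁻¹ * N i) p q := by
    intro i p q
    rw [Matrix.mul_apply]
    exact Finset.sum_nonneg fun r _ => mul_nonneg ((hMM i).2.2 p r) (hNnn i r q)
  -- xstar solves the sub-LCPs
  have hstar : ∀ i, SolvesLCP (M i) (fun p => f p + (N i *ᵥ xstar) p) xstar := by
    intro i
    have hMA : ∀ p, (M i *ᵥ xstar) p - (N i *ᵥ xstar) p = (A *ᵥ xstar) p := by
      intro p
      rw [hsplit i, Matrix.sub_mulVec]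
      simp
    refine ⟨hxstar.1, fun p => by have h1 := hxstar.2.1 p; have h2 := hMA p; simp only []; linarith, ?_⟩
    rw [← hxstar.2.2]
    apply Finset.sum_congr rfl
    intro p _
    have h2 := hMA p
    have h3 : (M i *ᵥ xstar) p - (f p + (N i *ᵥ xstar) p) = (A *ᵥ xstar) p - f p := by linarith
    rw [h3]
  -- per-step contraction
  have hstep : ∀ k, (⨆ r, |x (k+1) r - xstar r|) ≤ c * ⨆ r, |x k r - xstar r| := by
    intro k
    set ek : ℝ := ⨆ r, |x k r - xstar r| with hekdef
    have hek0 : 0 ≤ ek := hvN0 _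
    have he : ∀ q, |x k q - xstar q| ≤ ek := habs_le _
    set e : Fin n → ℝ := fun q => |x k q - xstar q| with hedef
    -- inner iteration error bound
    have haux : ∀ (i : Fin m) (j : ℕ), j ≤ s k i →
        ∀ p, |y k i j p - xstar p| ≤ ((((M i)⁻¹ * N i) ^ j) *ᵥ e) p := by
      intro i j
      induction j with
      | zero =>
        intro _ p
        rw [hy0 k i, pow_zero, Matrix.one_mulVec]
      | succ j ih =>
        intro hj p
        have hyj := hy k i (j+1) (by omega) hj
        simp only [Nat.add_sub_cancel] at hyj
        have hlip := lcp_lipschitz (hMM i) hyj (hstar i) p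
        have hg : ∀ q, |(f q + (N i *ᵥ y k i j) q) - (f q + (N i *ᵥ xstar) q)|
            ≤ (N i *ᵥ ((((M i)⁻¹ * N i) ^ j) *ᵥ e)) q := by
          intro q
          have h1 : (f q + (N i *ᵥ y k i j) q) - (f q + (N i *ᵥ xstar) q)
              = ∑ r, N i q r * (y k i j r - xstar r) := by
            simp [Matrix.mulVec, dotProduct, mul_sub, Finset.sum_sub_distrib]
          rw [h1]
          calc |∑ r, N i q r * (y k i j r - xstar r)|
              ≤ ∑ r, |N i q r * (y k i j r - xstar r)| := Finset.abs_sum_le_sum_abs _ _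
            _ ≤ ∑ r, N i q r * ((((M i)⁻¹ * N i) ^ j) *ᵥ e) r := by
                apply Finset.sum_le_sum
                intro r _
                rw [abs_mul, abs_of_nonneg (hNnn i q r)]
                exact mul_le_mul_of_nonneg_left (ih (by omega) r) (hNnn i q r)
            _ = (N i *ᵥ ((((M i)⁻¹ * N i) ^ j) *ᵥ e)) q := by
                simp [Matrix.mulVec, dotProduct]
        have h2 := mulVec_mono (fun p q => (hMM i).2.2 p q) hg p
        have h3 : ((M i)⁻¹ *ᵥ (N i *ᵥ ((((M i)⁻¹ * N i) ^ j) *ᵥ e))) p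
            = ((((M i)⁻¹ * N i) ^ (j+1)) *ᵥ e) p := by
          rw [Matrix.mulVec_mulVec, Matrix.mulVec_mulVec, pow_succ']
        exact le_trans hlip (le_trans h2 (le_of_eq h3))
    -- bound at the final inner step
    have hyb : ∀ (i : Fin m) (p : Fin n), |y k i (s k i) p - xstar p| ≤ η * ek := by
      intro i p
      refine le_trans (haux i (s k i) le_rfl p) ?_
      have hTp := pow_entries_nonneg (hTnn i) (s k i)
      calc ((((M i)⁻¹ * N i) ^ (s k i)) *ᵥ e) p
          ≤ (∑ q, |(((M i)⁻¹ * N i) ^ (s k i)) p q|) * ek := by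
            rw [Matrix.mulVec, dotProduct, Finset.sum_mul]
            apply Finset.sum_le_sum
            intro q _
            calc (((M i)⁻¹ * N i) ^ (s k i)) p q * e q
                ≤ (((M i)⁻¹ * N i) ^ (s k i)) p q * ek :=
                  mul_le_mul_of_nonneg_left (he q) (hTp p q)
              _ = |(((M i)⁻¹ * N i) ^ (s k i)) p q| * ek := by
                  rw [abs_of_nonneg (hTp p q)]
        _ ≤ infNorm (((M i)⁻¹ * N i) ^ (s k i)) * ek :=
            mul_le_mul_of_nonneg_right (hrow_le _ p) hek0
        _ ≤ η * ek := mul_le_mul_of_nonneg_right (hnorm i (s k i) (hs k i)) hek0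
    -- diagonal action of the E i
    have hEdp : ∀ (i : Fin m) (p : Fin n) (d : Fin n → ℝ), (E i *ᵥ d) p = E i p p * d p := by
      intro i p d
      rw [Matrix.mulVec, dotProduct]
      rw [Finset.sum_eq_single p]
      · intro q _ hq
        rw [hEdiag i p q (Ne.symm hq), zero_mul]
      · intro h
        exact absurd (Finset.mem_univ p) h
    apply ciSup_le
    intro p
    have hx1 : x (k+1) p = ω * (∑ i, (E i *ᵥ y k i (s k i)) p) + (1 - ω) * x k p := by
      rw [hx k]
      simp [Finset.sum_apply]
    have hxs : ∑ i, (E i *ᵥ xstar) p = xstar p := by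
      have h1 : ∑ i, (E i *ᵥ xstar) p = ∑ i, E i p p * xstar p :=
        Finset.sum_congr rfl fun i _ => hEdp i p xstar
      rw [h1, ← Finset.sum_mul, hEpp1 p, one_mul]
    have hterm : ∀ i : Fin m,
        |(E i *ᵥ y k i (s k i)) p - (E i *ᵥ xstar) p| ≤ infNorm (E i) * (η * ek) := by
      intro i
      rw [hEdp, hEdp, ← mul_sub, abs_mul, abs_of_nonneg (hEnn i p)]
      calc E i p p * |y k i (s k i) p - xstar p|
          ≤ E i p p * (η * ek) := mul_le_mul_of_nonneg_left (hyb i p) (hEnn i p)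
        _ ≤ infNorm (E i) * (η * ek) :=
            mul_le_mul_of_nonneg_right (hEdd i p) (mul_nonneg hη0 hek0)
    have hdiff : x (k+1) p - xstar p
        = ω * (∑ i, ((E i *ᵥ y k i (s k i)) p - (E i *ᵥ xstar) p))
          + (1 - ω) * (x k p - xstar p) := by
      rw [hx1, Finset.sum_sub_distrib, hxs]
      ring
    calc |x (k+1) p - xstar p|
        ≤ ω * |∑ i, ((E i *ᵥ y k i (s k i)) p - (E i *ᵥ xstar) p)|
          + |1 - ω| * |x k p - xstar p| := by
          rw [hdiff]
          refine (abs_add_le _ _).trans ?_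
          rw [abs_mul, abs_mul, abs_of_nonneg hω.1.le]
      _ ≤ ω * (∑ i, infNorm (E i) * (η * ek)) + |1 - ω| * ek := by
          refine add_le_add ?_ ?_
          · refine mul_le_mul_of_nonneg_left ?_ hω.1.le
            exact (Finset.abs_sum_le_sum_abs _ _).trans (Finset.sum_le_sum fun i _ => hterm i)
          · exact mul_le_mul_of_nonneg_left (he p) (abs_nonneg _)
      _ = ω * ((∑ i, infNorm (E i)) * (η * ek)) + |1 - ω| * ek := by
          rw [← Finset.sum_mul]
      _ = c * ek := by
          have h4 : (∑ i, infNorm (E i)) * (η * ek) = θ * ek := by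
            rw [← mul_assoc, hηθ]
          rw [h4, hcdef]
          ring
  -- geometric decay
  have herr : ∀ k, (⨆ r, |x k r - xstar r|) ≤ c ^ k * ⨆ r, |x 0 r - xstar r| := by
    intro k
    induction k with
    | zero => rw [pow_zero, one_mul]
    | succ k ih =>
      calc (⨆ r, |x (k+1) r - xstar r|) ≤ c * ⨆ r, |x k r - xstar r| := hstep k
        _ ≤ c * (c ^ k * ⨆ r, |x 0 r - xstar r|) := mul_le_mul_of_nonneg_left ih hc0
        _ = c ^ (k+1) * ⨆ r, |x 0 r - xstar r| := by rw [pow_succ]; ring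
  rw [tendsto_pi_nhds]
  intro p
  have hsq : Tendsto (fun k => x k p - xstar p) atTop (nhds 0) := by
    have htend : Tendsto (fun k => c ^ k * ⨆ r, |x 0 r - xstar r|) atTop (nhds 0) := by
      have h := tendsto_pow_atTop_nhds_zero_of_lt_one hc0 hc1
      have h2 := h.mul_const (⨆ r, |x 0 r - xstar r|)
      simpa using h2
    refine squeeze_zero_norm (fun k => ?_) htend
    calc ‖x k p - xstar p‖ = |x k p - xstar p| := rfl
      _ ≤ ⨆ r, |x k r - xstar r| := habs_le (fun r => x k r - xstar r) p
      _ ≤ c ^ k * ⨆ r, |x 0 r - xstar r| := herr k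
  have h3 := hsq.add_const (xstar p)
  simpa using h3
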